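/- Suppose Γ₂ᵛ(f) ≥ −K₁‖∇ᵛf‖² + κ⟨∇ᵛf,∇ʰf⟩, Γ₂^{v,h}(f) ≤ S₁ + (κ/2)(M‖∇ᵛf‖² − ‖∇ʰf‖²), with appropriate quadratic remainder terms controlled by Young's inequality. Then there exist a, b, c, d > 0 with b² < ac and a real constant K such that aΓ₂ᵛ(f) − 2bΓ₂^{v,h}(f) + cΓ₂^h(f) + dΓ₂^ξ(f) ≥ −K‖∇ᵛf‖² + ‖∇ʰf‖². (Abstract finite-dimensional version: given the four quadratic lower/upper bounds of Proposition 1 in terms of Hessian and gradient norms with bounded curvature constant M, the stated positive linear combination exists.) -/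
import Mathlib

set_option maxHeartbeats 1000000


/-- abstract version of Proposition 1: given the explicit formulas of
Lemma 1 for `Γ₂ᵛ, Γ₂^{v,h}, Γ₂^h, Γ₂^ξ` in terms of Hessian/gradient norms, pairings
controlled by Cauchy–Schwarz and curvature terms bounded by `M`, there exist
`a,b,c,d > 0` with `b² < ac` and `K ∈ ℝ` such that
`aΓ₂ᵛ − 2bΓ₂^{v,h} + cΓ₂^h + dΓ₂^ξ ≥ −K‖∇ᵛf‖² + ‖∇ʰf‖²`. -/
theorem generalized_bakry_emery_combination
    (σ κ : ℝ) (hσ : 0 < σ) (hκ : 0 < κ)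
    (n : ℕ) (hn : 2 ≤ n) (M : ℝ) (hM : 0 ≤ M) :
    ∃ a b c d : ℝ, 0 < a ∧ 0 < b ∧ 0 < c ∧ 0 < d ∧ b ^ 2 < a * c ∧
      ∃ K : ℝ,
        ∀ Hv Hvh Hvξ Gv Gh Gξ Pgvh Phh Pξv Pξh Rvv Rvh Q : ℝ,
          0 ≤ Hv → 0 ≤ Hvh → 0 ≤ Hvξ → 0 ≤ Gv → 0 ≤ Gh → 0 ≤ Gξ →
          |Pgvh| ≤ Gv * Gh → |Phh| ≤ Hv * Hvh → |Pξv| ≤ Hvξ * Gv →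
          |Pξh| ≤ Hvξ * Gh → |Rvv| ≤ M * Gv ^ 2 → |Rvh| ≤ M * Gv * Gh →
          |Q| ≤ (n - 1 : ℝ) * Hvh * Gξ →
          -K * Gv ^ 2 + Gh ^ 2 ≤
            a * (σ ^ 2 / 2 * (Hv ^ 2 + ((n : ℝ) - 2) * Gv ^ 2) + κ * Pgvh)
            - 2 * b * (σ ^ 2 / 2 * (Phh + ((n : ℝ) - 1) / 2 * Pgvh - Pξv)
                + κ / 2 * (Rvv - Gh ^ 2))
            + c * (σ ^ 2 / 2 * (Hvh ^ 2 + Gh ^ 2 - 2 * Pξh) + κ * Rvh)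
            + d * (σ ^ 2 / 2 * (Hvξ ^ 2 + ((n : ℝ) - 1) * Gξ ^ 2 + 2 * Q)) := by
  have hs : (0:ℝ) < σ ^ 2 := by positivity
  set s : ℝ := σ ^ 2 with hsdef
  have hn2 : (2:ℝ) ≤ (n : ℝ) := by exact_mod_cast hn
  set nR : ℝ := (n : ℝ) with hnRdef
  have hnRpos : (0:ℝ) < nR := by linarith
  obtain ⟨b, hbpos, hb⟩ : ∃ b : ℝ, 0 < b ∧ b * κ = 1 + nR ^ 2 * s :=
    ⟨(1 + nR ^ 2 * s) / κ, by positivity, by field_simp⟩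
  obtain ⟨K, hK⟩ : ∃ K : ℝ, K * (nR * s) =
      (b * κ * M + b ^ 2 * s) * (nR * s) + ((b ^ 2 + 1) * κ + nR * κ * M) ^ 2 :=
    ⟨((b * κ * M + b ^ 2 * s) * (nR * s) + ((b ^ 2 + 1) * κ + nR * κ * M) ^ 2) / (nR * s),
      by field_simp⟩
  refine ⟨b ^ 2 + 1, b, nR, 1, by positivity, hbpos, hnRpos, one_pos, ?_, K, ?_⟩
  · nlinarith [sq_nonneg b]
  intro Hv Hvh Hvξ Gv Gh Gξ Pgvh Phh Pξv Pξh Rvv Rvh Q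
  intro hHv hHvh hHvξ hGv hGh hGξ h1 h2 h3 h4 h5 h6 h7
  obtain ⟨h1l, h1r⟩ := abs_le.mp h1
  obtain ⟨h2l, h2r⟩ := abs_le.mp h2
  obtain ⟨h3l, h3r⟩ := abs_le.mp h3
  obtain ⟨h4l, h4r⟩ := abs_le.mp h4
  obtain ⟨h5l, h5r⟩ := abs_le.mp h5
  obtain ⟨h6l, h6r⟩ := abs_le.mp h6
  obtain ⟨h7l, h7r⟩ := abs_le.mp h7
  have hspos : (0:ℝ) ≤ s := hs.le
  have hbs : (0:ℝ) ≤ b * s := by positivity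
  have hbk : (0:ℝ) ≤ b * κ := by positivity
  have hns : (0:ℝ) ≤ nR * s := by positivity
  have hnk : (0:ℝ) ≤ nR * κ := by positivity
  -- combined coefficient of Pgvh
  have e2 : 0 ≤ b * s * (nR ^ 2 - (nR - 1) / 2) :=
    mul_nonneg hbs (by nlinarith)
  have hCp0 : 0 ≤ (b ^ 2 + 1) * κ - b * s * (nR - 1) / 2 := by
    have e1 : (b ^ 2 + 1) * κ - b * s * (nR - 1) / 2
        = b + b * (nR ^ 2 * s) + κ - b * s * (nR - 1) / 2 := by
      linear_combination b * hb
    nlinarith [e1, e2]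
  have hCpa : (b ^ 2 + 1) * κ - b * s * (nR - 1) / 2 ≤ (b ^ 2 + 1) * κ := by
    have : 0 ≤ b * s * (nR - 1) := mul_nonneg hbs (by linarith)
    linarith
  have f1 : -((b ^ 2 + 1) * κ) * (Gv * Gh) ≤
      ((b ^ 2 + 1) * κ - b * s * (nR - 1) / 2) * Pgvh := by
    have t1 := mul_le_mul_of_nonneg_left h1l hCp0
    nlinarith [mul_nonneg hGv hGh]
  have f2 : b * s * Phh ≤ b * s * (Hv * Hvh) := mul_le_mul_of_nonneg_left h2r hbs
  have f3 : -(b * s) * (Hvξ * Gv) ≤ b * s * Pξv := by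
    have := mul_le_mul_of_nonneg_left h3l hbs; linarith
  have f4 : b * κ * Rvv ≤ b * κ * (M * Gv ^ 2) := mul_le_mul_of_nonneg_left h5r hbk
  have f5 : nR * s * Pξh ≤ nR * s * (Hvξ * Gh) := mul_le_mul_of_nonneg_left h4r hns
  have f6 : -(nR * κ) * (M * Gv * Gh) ≤ nR * κ * Rvh := by
    have := mul_le_mul_of_nonneg_left h6l hnk; linarith
  have f7 : -(s * ((nR - 1) * Hvh * Gξ)) ≤ s * Q := by
    have := mul_le_mul_of_nonneg_left h7l hspos; linarith
  -- the worst-case polynomial G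
  set G : ℝ :=
      s / 2 * (b ^ 2 + 1) * Hv ^ 2 + s / 2 * (b ^ 2 + 1) * (nR - 2) * Gv ^ 2
      - (b ^ 2 + 1) * κ * (Gv * Gh)
      - b * s * (Hv * Hvh) - b * s * (Hvξ * Gv) - b * κ * (M * Gv ^ 2)
      + b * κ * Gh ^ 2
      + s / 2 * nR * Hvh ^ 2 + s / 2 * nR * Gh ^ 2 - nR * s * (Hvξ * Gh)
      - nR * κ * (M * Gv * Gh)
      + s / 2 * Hvξ ^ 2 + s / 2 * (nR - 1) * Gξ ^ 2 - s * ((nR - 1) * Hvh * Gξ)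
      + K * Gv ^ 2 - Gh ^ 2 with hGdef
  have key : 2 * (b ^ 2 + 1) * nR * s * G =
      nR * s ^ 2 * ((b ^ 2 + 1) * Hv - b * Hvh) ^ 2 + nR * s ^ 2 * Hvh ^ 2
      + (b ^ 2 + 1) * nR * s ^ 2 / 2 * (Hvξ - 2 * nR * Gh) ^ 2
      + (b ^ 2 + 1) * nR * s ^ 2 / 2 * (Hvξ - 2 * b * Gv) ^ 2
      + (b ^ 2 + 1) * nR * s ^ 2 * (nR - 1) * (Hvh - Gξ) ^ 2
      + (b ^ 2 + 1) / 2 * (nR * s * Gh - 2 * ((b ^ 2 + 1) * κ + nR * κ * M) * Gv) ^ 2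
      + (b ^ 2 + 1) * nR ^ 2 * s ^ 2 / 2 * Gh ^ 2
      + (b ^ 2 + 1) ^ 2 * nR * s ^ 2 * (nR - 2) * Gv ^ 2 := by
    rw [hGdef]
    linear_combination (2 * nR * s * (b ^ 2 + 1) * Gh ^ 2) * hb
      + (2 * (b ^ 2 + 1) * Gv ^ 2) * hK
  have hGnonneg : 0 ≤ G := by
    have hrhs : 0 ≤ 2 * (b ^ 2 + 1) * nR * s * G := by
      rw [key]
      have q1 : (0:ℝ) ≤ nR * s ^ 2 * ((b ^ 2 + 1) * Hv - b * Hvh) ^ 2 := by positivity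
      have q2 : (0:ℝ) ≤ nR * s ^ 2 * Hvh ^ 2 := by positivity
      have q3 : (0:ℝ) ≤ (b ^ 2 + 1) * nR * s ^ 2 / 2 * (Hvξ - 2 * nR * Gh) ^ 2 := by
        positivity
      have q4 : (0:ℝ) ≤ (b ^ 2 + 1) * nR * s ^ 2 / 2 * (Hvξ - 2 * b * Gv) ^ 2 := by
        positivity
      have q5 : (0:ℝ) ≤ (b ^ 2 + 1) * nR * s ^ 2 * (nR - 1) * (Hvh - Gξ) ^ 2 := by
        have : (0:ℝ) ≤ nR - 1 := by linarith
        positivity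
      have q6 : (0:ℝ) ≤
          (b ^ 2 + 1) / 2 * (nR * s * Gh - 2 * ((b ^ 2 + 1) * κ + nR * κ * M) * Gv) ^ 2 := by
        positivity
      have q7 : (0:ℝ) ≤ (b ^ 2 + 1) * nR ^ 2 * s ^ 2 / 2 * Gh ^ 2 := by positivity
      have q8 : (0:ℝ) ≤ (b ^ 2 + 1) ^ 2 * nR * s ^ 2 * (nR - 2) * Gv ^ 2 := by
        have : (0:ℝ) ≤ nR - 2 := by linarith
        positivity
      linarith
    have hcpos : (0:ℝ) < 2 * (b ^ 2 + 1) * nR * s := by positivity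
    exact nonneg_of_mul_nonneg_right (by linarith [hrhs]) hcpos
  rw [hGdef] at hGnonneg
  linarith [f1, f2, f3, f4, f5, f6, f7, hGnonneg]
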